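/- arXiv:1205.4003 — 2 statements merged into one kernel-verified Lean document; each statement's English description precedes it below -/
import Mathlib

section
/- Fix q, t with 0 ≤ |q| < t, n ∈ ℕ, and a pair partition V = {(w_1,z_1),…,(w_n,z_n)} ∈ 𝒫₂(2n), with ε(1), …, ε(2n) ∈ {1,*} such that (ε(w_i), ε(z_i)) = (1,*) for every block. Let {μ(i,j)}_{1≤i<j} be i.i.d. non-vanishing real random variables with E[μ(i,j)] = q/t and E[μ(i,j)²] = 1, with coefficients populated by the standard prescription. For a tuple ι = (ι(1),…,ι(2n)) ~ V, let β(ι) := Π_{(w_j,w_k,z_j,z_k) ∈ Cross(V)} μ_{ε(z_j),ε(w_k)}(ι(z_j),ι(w_k)) · Π_{(w_ℓ,w_m,z_m,z_ℓ) ∈ Nest(V)} μ_{ε(z_ℓ),ε(z_m)}(ι(z_ℓ),ι(z_m)) μ_{ε(z_ℓ),ε(w_m)}(ι(z_ℓ),ι(w_m)). If two tuples i ~ V and j ~ V are such that their sets of values intersect in at most one element, then E[β(i)·β(j)] = q^{2·cross(V)} t^{2·nest(V)} = E[β(i)]·E[β(j)]. -/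
open Filter MeasureTheory ProbabilityTheory
open scoped BigOperators ComplexOrder Classical

noncomputable section

/-- `sel a e` is `a^ε`: `a` if `e = false` (i.e. ε = 1) and `star a` if `e = true` (i.e. ε = ∗). -/
def sel {A : Type*} [Star A] (a : A) (e : Bool) : A := if e then star a else a

/-- The product `b_{i(1)}^{ε(1)} ⋯ b_{i(r)}^{ε(r)}`, indexed by a list of (index, exponent) pairs. -/
def listProd {A : Type*} [Monoid A] [Star A] (b : ℕ → A) (l : List (ℕ × Bool)) : A :=
  (l.map fun p => sel (b p.1) p.2).prod

/-- The product `b_{i(1)}^{ε(1)} ⋯ b_{i(r)}^{ε(r)}`, indexed by `Fin r`. -/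
def tupProd {A : Type*} [Monoid A] [Star A] (b : ℕ → A) {r : ℕ}
    (i : Fin r → ℕ) (eps : Fin r → Bool) : A :=
  (List.ofFn fun k => sel (b (i k)) (eps k)).prod

/-- The mixed moment `φ(X^{ε(1)} ⋯ X^{ε(r)})` of a single element `X`. -/
def smom {A : Type*} [Ring A] [StarRing A] [Algebra ℂ A] (φ : A →ₗ[ℂ] ℂ)
    (X : A) {r : ℕ} (eps : Fin r → Bool) : ℂ :=
  φ ((List.ofFn fun k => sel X (eps k)).prod)

/-- The commutation coefficients are nonzero reals. -/
def NonzeroCoeff (c : Bool → Bool → ℕ → ℕ → ℝ) : Prop :=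
  ∀ i j : ℕ, i ≠ j → ∀ e e' : Bool, c e e' i j ≠ 0

/-- Relations (A)–(B) on the commutation coefficients (`false` = 1, `true` = ∗):
`μ_{ε,ε'}(i,j) = 1/μ_{ε',ε}(j,i)`, `μ_{1,1}(i,j) = 1/μ_{∗,∗}(i,j)`,
`μ_{1,∗}(i,j) = 1/μ_{∗,1}(i,j)`. -/
def RelAB (c : Bool → Bool → ℕ → ℕ → ℝ) : Prop :=
  (∀ i j : ℕ, i ≠ j → ∀ e e' : Bool, c e e' i j = (c e' e j i)⁻¹) ∧
  (∀ i j : ℕ, i ≠ j → c false false i j = (c true true i j)⁻¹) ∧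
  (∀ i j : ℕ, i ≠ j → c false true i j = (c true false i j)⁻¹)

/-- Condition (★) for a sequence `b` in a complex ∗-probability space, with
commutation coefficients `c e e' i j = μ_{ε,ε'}(i,j)` (`false` = 1, `true` = ∗).
The factoring over naturally ordered products is stated in block form: a naturally
ordered product is a concatenation of nonempty blocks with constant indices, the
(distinct) block indices being strictly increasing. -/
structure StarCond {A : Type*} [Ring A] [StarRing A] [Algebra ℂ A]
    (φ : A →ₗ[ℂ] ℂ) (b : ℕ → A) (c : Bool → Bool → ℕ → ℕ → ℝ) : Prop where
  zero_mean : ∀ i, φ (b i) = 0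
  zero_mean_star : ∀ i, φ (star (b i)) = 0
  zero_bb : ∀ i, φ (b i * b i) = 0
  zero_ss : ∀ i, φ (star (b i) * star (b i)) = 0
  zero_sb : ∀ i, φ (star (b i) * b i) = 0
  covar : ∀ i j : ℕ, ∀ e e' : Bool,
    φ (sel (b i) e * sel (b i) e') = φ (sel (b j) e * sel (b j) e')
  bounded : ∀ r : ℕ, ∃ α : ℝ, 0 ≤ α ∧ ∀ l : List (ℕ × Bool), l.length = r →
    ‖φ (listProd b l)‖ ≤ α
  factors : ∀ L : List (ℕ × List Bool),
    List.Chain' (· < ·) (L.map Prod.fst) → (∀ p ∈ L, p.2 ≠ []) →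
    φ ((L.map fun p => (p.2.map (sel (b p.1))).prod).prod)
      = (L.map fun p => φ ((p.2.map (sel (b p.1))).prod)).prod
  commRel : ∀ i j : ℕ, i ≠ j → ∀ e e' : Bool,
    sel (b i) e * sel (b j) e' = ((c e' e j i : ℝ) : ℂ) • (sel (b j) e' * sel (b i) e)

/-- The normalized partial sum `S_N = (b 1 + ⋯ + b N)/√N`. -/
def pSum {A : Type*} [Ring A] [Algebra ℂ A] (b : ℕ → A) (N : ℕ) : A :=
  (((Real.sqrt N)⁻¹ : ℝ) : ℂ) • ∑ i ∈ Finset.Icc 1 N, b i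

/-- A pair partition `V = {(w 1, z 1), …, (w n, z n)}` of `{1, …, 2n}` (here of `Fin (2n)`),
with `w i < z i`, `w` strictly increasing, and the `w i, z i` exhausting `Fin (2n)`. -/
structure PairPartition (n : ℕ) where
  w : Fin n → Fin (2 * n)
  z : Fin n → Fin (2 * n)
  wz : ∀ i, w i < z i
  mono : StrictMono w
  bij : Function.Bijective fun p : Fin n × Bool => if p.2 then z p.1 else w p.1

instance (n : ℕ) : Fintype (PairPartition n) :=
  Fintype.ofInjective (fun V : PairPartition n => (V.w, V.z)) (by
    rintro ⟨w₁, z₁, h₁, h₂, h₃⟩ ⟨w₂, z₂, g₁, g₂, g₃⟩ h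
    simp only [Prod.mk.injEq] at h
    obtain ⟨rfl, rfl⟩ := h
    rfl)

/-- The crossings of a pair partition: pairs of blocks `(j, k)` with `w j < w k < z j < z k`. -/
def crossSet {n : ℕ} (V : PairPartition n) : Finset (Fin n × Fin n) :=
  Finset.univ.filter fun p => V.w p.1 < V.w p.2 ∧ V.w p.2 < V.z p.1 ∧ V.z p.1 < V.z p.2

/-- The nestings of a pair partition: pairs of blocks `(j, m)` with `w j < w m < z m < z j`. -/
def nestSet {n : ℕ} (V : PairPartition n) : Finset (Fin n × Fin n) :=
  Finset.univ.filter fun p => V.w p.1 < V.w p.2 ∧ V.w p.2 < V.z p.2 ∧ V.z p.2 < V.z p.1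

/-- `cross(V)`, the number of crossings. -/
def crossNum {n : ℕ} (V : PairPartition n) : ℕ := (crossSet V).card

/-- `nest(V)`, the number of nestings. -/
def nestNum {n : ℕ} (V : PairPartition n) : ℕ := (nestSet V).card

/-- Two positions lie in the same block of the pair partition `V`. -/
def sameBlock {n : ℕ} (V : PairPartition n) (k₁ k₂ : Fin (2 * n)) : Prop :=
  k₁ = k₂ ∨ ∃ m, (k₁ = V.w m ∧ k₂ = V.z m) ∨ (k₁ = V.z m ∧ k₂ = V.w m)

/-- `(i(1), …, i(2n)) ∼ V`: entries agree exactly on the blocks of `V`. -/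
def tupleEquiv {n : ℕ} {α : Type*} (V : PairPartition n) (i : Fin (2 * n) → α) : Prop :=
  ∀ k₁ k₂, i k₁ = i k₂ ↔ sameBlock V k₁ k₂

/-- The tuples in `[N]^{2n} = {1, …, N}^{2n}` that are equivalent to `V`. -/
def tuples (n N : ℕ) (V : PairPartition n) : Finset (Fin (2 * n) → ℕ) :=
  (Fintype.piFinset fun _ : Fin (2 * n) => Finset.Icc 1 N).filter fun i => tupleEquiv V i

/-- `β^{ε(1),…,ε(2n)}_{i(1),…,i(2n)}`: the product over crossings of `V` of
`μ_{ε(z_j),ε(w_k)}(i(z_j),i(w_k))` times the product over nestings of `V` of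
`μ_{ε(z_j),ε(z_m)}(i(z_j),i(z_m)) · μ_{ε(z_j),ε(w_m)}(i(z_j),i(w_m))`. -/
def betaProd (n : ℕ) (V : PairPartition n) (eps : Fin (2 * n) → Bool)
    (c : Bool → Bool → ℕ → ℕ → ℝ) (i : Fin (2 * n) → ℕ) : ℝ :=
  (∏ p ∈ crossSet V, c (eps (V.z p.1)) (eps (V.w p.2)) (i (V.z p.1)) (i (V.w p.2))) *
  ∏ p ∈ nestSet V,
    c (eps (V.z p.1)) (eps (V.z p.2)) (i (V.z p.1)) (i (V.z p.2)) *
      c (eps (V.z p.1)) (eps (V.w p.2)) (i (V.z p.1)) (i (V.w p.2))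

/-- `X_N = N^{-n} Σ_{(i(1),…,i(2n)) ∼ V} β^{ε(1),…,ε(2n)}_{i(1),…,i(2n)}`, whose limit
(when it exists) is `λ_{V,ε(1),…,ε(2n)}`. -/
def lambdaSum (n : ℕ) (V : PairPartition n) (eps : Fin (2 * n) → Bool)
    (c : Bool → Bool → ℕ → ℕ → ℝ) (N : ℕ) : ℝ :=
  ((N : ℝ)⁻¹) ^ n * ∑ i ∈ tuples n N V, betaProd n V eps c i

/-- One-pair standard prescription: for `x = μ(i,j)` (with `i < j`),
`μ_{∗,∗} = x`, `μ_{∗,1} = t·x`, `μ_{1,1} = x⁻¹`, `μ_{1,∗} = (t·x)⁻¹`. -/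
def prescOne (t x : ℝ) (e e' : Bool) : ℝ :=
  if e then (if e' then x else t * x) else (if e' then (t * x)⁻¹ else x⁻¹)

/-- The standard prescription of commutation coefficients from `{μ(i,j)}_{i<j}`,
extended to `i > j` by `μ_{ε',ε}(j,i) = 1/μ_{ε,ε'}(i,j)`. -/
def presc (t : ℝ) (m : ℕ → ℕ → ℝ) (e e' : Bool) (i j : ℕ) : ℝ :=
  if i < j then prescOne t (m i j) e e' else (prescOne t (m j i) e' e)⁻¹

/-- The index set `{(i,j) : 1 ≤ i < j}` of the random commutation coefficients. -/
def PairIdx : Type := {p : ℕ × ℕ // 1 ≤ p.1 ∧ p.1 < p.2}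

/-- `σ_x = [[1,0],[0,√t·x]]`. -/
def sigmaM (t x : ℝ) : Matrix (Fin 2) (Fin 2) ℝ := !![1, 0; 0, Real.sqrt t * x]

/-- `γ = [[0,1],[0,0]]`. -/
def gammaM : Matrix (Fin 2) (Fin 2) ℝ := !![0, 1; 0, 0]

/-- The two-parameter Jordan–Wigner matrix
`b_{n,i} = σ_{μ(1,i)} ⊗ ⋯ ⊗ σ_{μ(i-1,i)} ⊗ γ ⊗ σ₁^{⊗(n-i)} ∈ M₂(ℝ)^{⊗n}`,
realized on the index set `Fin n → Fin 2` (tensor/Kronecker products of matrices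
have entries the products of the entries of the factors). -/
def jw (t : ℝ) (m : ℕ → ℕ → ℝ) (n i : ℕ) : Matrix (Fin n → Fin 2) (Fin n → Fin 2) ℝ :=
  Matrix.of fun x y => ∏ k : Fin n,
    (if (k : ℕ) + 1 < i then sigmaM t (m ((k : ℕ) + 1) i)
     else if (k : ℕ) + 1 = i then gammaM
     else sigmaM t 1) (x k) (y k)

/-- `φ_n(a) = ⟨a e₀, e₀⟩ = a₀₀`. -/
def phiM (n : ℕ) (a : Matrix (Fin n → Fin 2) (Fin n → Fin 2) ℝ) : ℝ :=
  a (fun _ => 0) (fun _ => 0)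

/-- The normalized partial sum `S_N = (b_{N,1} + ⋯ + b_{N,N})/√N` of Jordan–Wigner matrices. -/
def jwS (t : ℝ) (m : ℕ → ℕ → ℝ) (N : ℕ) : Matrix (Fin N → Fin 2) (Fin N → Fin 2) ℝ :=
  (Real.sqrt N)⁻¹ • ∑ i ∈ Finset.Icc 1 N, jw t m N i

/-! ### Auxiliary lemmas -/

section Aux

/-- Core lemma: the integral of a finite product of functions of independent random
variables, reindexed injectively, factorizes. -/
lemma integral_prod_comp_indep {Ω : Type*} [MeasureSpace Ω]
    [IsProbabilityMeasure (ℙ : Measure Ω)] {ι κ : Type*} (X : κ → Ω → ℝ)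
    (hX : iIndepFun X ℙ)
    (hXm : ∀ k, Measurable (X k)) (φ : ι → ℝ → ℝ) (hφ : ∀ a, Measurable (φ a)) :
    ∀ (s : Finset ι) (g : ι → κ), Set.InjOn g s →
      ∫ ω, ∏ a ∈ s, φ a (X (g a) ω) ∂ℙ = ∏ a ∈ s, ∫ ω, φ a (X (g a) ω) ∂ℙ := by
  intro s
  induction s using Finset.induction_on with
  | empty => intro g _; simp
  | @insert a s ha ih =>
    intro g hg
    have hgs : Set.InjOn g s := hg.mono (Finset.coe_subset.mpr (Finset.subset_insert a s))
    have hga : ∀ b ∈ s, g b ≠ g a := by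
      intro b hb hEq
      exact ha ((hg (by simp [hb]) (by simp) hEq) ▸ hb)
    have hdisj : Disjoint ({g a} : Finset κ) (s.image g) := by
      rw [Finset.disjoint_singleton_left, Finset.mem_image]
      rintro ⟨b, hb, hEq⟩; exact hga b hb hEq
    have hbase := hX.indepFun_finset {g a} (s.image g) hdisj hXm
    have hf1 : Measurable fun v : (({g a} : Finset κ) → ℝ) =>
        φ a (v ⟨g a, Finset.mem_singleton_self _⟩) :=
      (hφ a).comp (measurable_pi_apply _)
    have hf2 : Measurable fun v : (((s.image g : Finset κ)) → ℝ) =>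
        ∏ b ∈ s.attach, φ b (v ⟨g b, Finset.mem_image_of_mem g b.2⟩) :=
      Finset.measurable_prod _ fun b _ => (hφ b).comp (measurable_pi_apply _)
    have hind := hbase.comp hf1 hf2
    have hA : ((fun v : (({g a} : Finset κ) → ℝ) =>
        φ a (v ⟨g a, Finset.mem_singleton_self _⟩)) ∘
          fun ω (k : ({g a} : Finset κ)) => X k ω) = fun ω => φ a (X (g a) ω) := rfl
    have hB : ((fun v : (((s.image g : Finset κ)) → ℝ) =>
        ∏ b ∈ s.attach, φ b (v ⟨g b, Finset.mem_image_of_mem g b.2⟩)) ∘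
          fun ω (k : ((s.image g : Finset κ))) => X k ω)
        = fun ω => ∏ b ∈ s, φ b (X (g b) ω) := by
      funext ω
      exact Finset.prod_attach s fun b => φ b (X (g b) ω)
    rw [hA, hB] at hind
    have hmA : AEStronglyMeasurable (fun ω => φ a (X (g a) ω)) ℙ :=
      ((hφ a).comp (hXm _)).aestronglyMeasurable
    have hmB : AEStronglyMeasurable (fun ω => ∏ b ∈ s, φ b (X (g b) ω)) ℙ :=
      (Finset.measurable_prod s fun b _ => (hφ b).comp (hXm _)).aestronglyMeasurable
    simp_rw [Finset.prod_insert ha]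
    rw [hind.integral_fun_mul_eq_mul_integral hmA hmB, ih g hgs]

namespace PairPartition

variable {n : ℕ} (V : PairPartition n)

lemma w_ne_z (a b : Fin n) : V.w a ≠ V.z b := by
  intro h
  have := V.bij.injective (a₁ := (a, false)) (a₂ := (b, true)) (by simpa using h)
  simp at this

lemma z_inj : Function.Injective V.z := by
  intro a b h
  have := V.bij.injective (a₁ := (a, true)) (a₂ := (b, true)) (by simpa using h)
  simpa using this

lemma sameBlock_w_w {a b : Fin n} : sameBlock V (V.w a) (V.w b) ↔ a = b := by
  constructor
  · rintro (h | ⟨m, ⟨h1, h2⟩ | ⟨h1, h2⟩⟩)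
    · exact V.mono.injective h
    · exact absurd h2 (V.w_ne_z b m)
    · exact absurd h1 (V.w_ne_z a m)
  · rintro rfl; exact Or.inl rfl

lemma sameBlock_z_w {a b : Fin n} : sameBlock V (V.z a) (V.w b) ↔ a = b := by
  constructor
  · rintro (h | ⟨m, ⟨h1, h2⟩ | ⟨h1, h2⟩⟩)
    · exact absurd h.symm (V.w_ne_z b a)
    · exact absurd h1.symm (V.w_ne_z m a)
    · exact (V.z_inj h1).trans (V.mono.injective h2).symm
  · rintro rfl; exact Or.inr ⟨a, Or.inr ⟨rfl, rfl⟩⟩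

lemma mem_cross {p : Fin n × Fin n} :
    p ∈ crossSet V ↔ V.w p.1 < V.w p.2 ∧ V.w p.2 < V.z p.1 ∧ V.z p.1 < V.z p.2 := by
  simp [crossSet]

lemma mem_nest {p : Fin n × Fin n} :
    p ∈ nestSet V ↔ V.w p.1 < V.w p.2 ∧ V.w p.2 < V.z p.2 ∧ V.z p.2 < V.z p.1 := by
  simp [nestSet]

lemma w_lt_of_mem_union {p : Fin n × Fin n} (hp : p ∈ crossSet V ∪ nestSet V) :
    V.w p.1 < V.w p.2 := by
  rcases Finset.mem_union.mp hp with h | h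
  · exact (V.mem_cross.mp h).1
  · exact (V.mem_nest.mp h).1

lemma disjoint_cross_nest : Disjoint (crossSet V) (nestSet V) := by
  rw [Finset.disjoint_left]
  intro p hc hn
  exact absurd ((V.mem_cross.mp hc).2.2.trans (V.mem_nest.mp hn).2.2) (lt_irrefl _)

end PairPartition

lemma presc_true_false (t : ℝ) (m : ℕ → ℕ → ℝ) {a b : ℕ} (hab : a ≠ b) :
    presc t m true false a b = t * m (min a b) (max a b) := by
  rcases lt_or_gt_of_ne hab with h | h
  · rw [presc, if_pos h]
    simp [prescOne, min_eq_left h.le, max_eq_right h.le]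
  · rw [presc, if_neg (by omega)]
    simp [prescOne, min_eq_right h.le, max_eq_left h.le]

lemma presc_true_true_lt (t : ℝ) (m : ℕ → ℕ → ℝ) {a b : ℕ} (h : a < b) :
    presc t m true true a b = m a b := by
  rw [presc, if_pos h]; simp [prescOne]

lemma presc_true_true_gt (t : ℝ) (m : ℕ → ℕ → ℝ) {a b : ℕ} (h : b < a) :
    presc t m true true a b = (m b a)⁻¹ := by
  rw [presc, if_neg (by omega)]; simp [prescOne]

/-- The canonical `PairIdx` attached to two distinct positive naturals. -/
def pidx (a b : ℕ) : PairIdx :=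
  if h : 1 ≤ min a b ∧ min a b < max a b then ⟨(min a b, max a b), h⟩
  else ⟨(1, 2), by norm_num⟩

lemma pidx_val {a b : ℕ} (ha : 1 ≤ a) (hb : 1 ≤ b) (hab : a ≠ b) :
    (pidx a b).1 = (min a b, max a b) := by
  have h : 1 ≤ min a b ∧ min a b < max a b := ⟨by omega, by omega⟩
  unfold pidx
  exact congrArg Subtype.val (dif_pos h)

/-- The function of `μ(min,max)` contributed by a crossing or nesting `p`. -/
def phiMap (t : ℝ) {n : ℕ} (V : PairPartition n) (u : Fin (2 * n) → ℕ)
    (p : Fin n × Fin n) : ℝ → ℝ :=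
  if p ∈ crossSet V then fun x => t * x
  else if u (V.w p.1) < u (V.w p.2) then fun x => x * (t * x)
  else fun x => x⁻¹ * (t * x)

lemma phiMap_measurable (t : ℝ) {n : ℕ} (V : PairPartition n) (u : Fin (2 * n) → ℕ)
    (p : Fin n × Fin n) : Measurable (phiMap t V u p) := by
  unfold phiMap
  split_ifs
  · exact measurable_const.mul measurable_id
  · exact measurable_id.mul (measurable_const.mul measurable_id)
  · exact measurable_inv.mul (measurable_const.mul measurable_id)

lemma betaProd_rewrite (t : ℝ) (m : ℕ → ℕ → ℝ) {n : ℕ} (V : PairPartition n)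
    (eps : Fin (2 * n) → Bool)
    (heps : ∀ k : Fin n, eps (V.w k) = false ∧ eps (V.z k) = true)
    (u : Fin (2 * n) → ℕ) (hu : tupleEquiv V u) (hu1 : ∀ k, 1 ≤ u k) :
    betaProd n V eps (presc t m) u
      = ∏ p ∈ crossSet V ∪ nestSet V,
          phiMap t V u p
            (m (pidx (u (V.w p.1)) (u (V.w p.2))).1.1
               (pidx (u (V.w p.1)) (u (V.w p.2))).1.2) := by
  have hz : ∀ k : Fin n, u (V.z k) = u (V.w k) := fun k =>
    (hu _ _).mpr (Or.inr ⟨k, Or.inr ⟨rfl, rfl⟩⟩)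
  have huw : ∀ a b : Fin n, u (V.w a) = u (V.w b) ↔ a = b := fun a b =>
    (hu _ _).trans V.sameBlock_w_w
  rw [Finset.prod_union V.disjoint_cross_nest, betaProd]
  congr 1
  · refine Finset.prod_congr rfl fun p hp => ?_
    have hlt : V.w p.1 < V.w p.2 := (V.mem_cross.mp hp).1
    have hne : u (V.w p.1) ≠ u (V.w p.2) := by
      intro h
      rw [(huw _ _).mp h] at hlt
      exact lt_irrefl _ hlt
    rw [(heps p.1).2, (heps p.2).1, hz p.1]
    simp only [pidx_val (hu1 _) (hu1 _) hne, phiMap, if_pos hp]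
    exact presc_true_false t m hne
  · refine Finset.prod_congr rfl fun p hp => ?_
    have hlt : V.w p.1 < V.w p.2 := (V.mem_nest.mp hp).1
    have hnc : p ∉ crossSet V := Finset.disjoint_right.mp V.disjoint_cross_nest hp
    have hne : u (V.w p.1) ≠ u (V.w p.2) := by
      intro h
      rw [(huw _ _).mp h] at hlt
      exact lt_irrefl _ hlt
    rw [(heps p.1).2, (heps p.2).2, (heps p.2).1, hz p.1, hz p.2]
    simp only [pidx_val (hu1 _) (hu1 _) hne, phiMap, if_neg hnc]
    rcases lt_or_gt_of_ne hne with h | h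
    · rw [if_pos h, presc_true_true_lt t m h, presc_true_false t m hne]
      simp [min_eq_left h.le, max_eq_right h.le]
    · rw [if_neg (not_lt.mpr h.le), presc_true_true_gt t m h, presc_true_false t m hne]
      simp [min_eq_right h.le, max_eq_left h.le]

lemma minmax_eq {a b c d : ℕ} (h1 : min a b = min c d) (h2 : max a b = max c d) :
    (a = c ∧ b = d) ∨ (a = d ∧ b = c) := by omega

lemma pidx_injOn {n : ℕ} (V : PairPartition n) (u : Fin (2 * n) → ℕ)
    (hu : tupleEquiv V u) (hu1 : ∀ k, 1 ≤ u k) :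
    Set.InjOn (fun p : Fin n × Fin n => pidx (u (V.w p.1)) (u (V.w p.2)))
      (↑(crossSet V ∪ nestSet V) : Set (Fin n × Fin n)) := by
  have huw : ∀ a b : Fin n, u (V.w a) = u (V.w b) ↔ a = b := fun a b =>
    (hu _ _).trans V.sameBlock_w_w
  intro p hp p' hp' hEq
  rw [Finset.mem_coe] at hp hp'
  have hwlt := V.w_lt_of_mem_union hp
  have hwlt' := V.w_lt_of_mem_union hp'
  have hne : u (V.w p.1) ≠ u (V.w p.2) := by
    intro h; rw [(huw _ _).mp h] at hwlt; exact lt_irrefl _ hwlt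
  have hne' : u (V.w p'.1) ≠ u (V.w p'.2) := by
    intro h; rw [(huw _ _).mp h] at hwlt'; exact lt_irrefl _ hwlt'
  have hv : ((pidx (u (V.w p.1)) (u (V.w p.2))).1 : ℕ × ℕ)
      = (pidx (u (V.w p'.1)) (u (V.w p'.2))).1 := congrArg Subtype.val hEq
  rw [pidx_val (hu1 _) (hu1 _) hne, pidx_val (hu1 _) (hu1 _) hne'] at hv
  have h1 : min (u (V.w p.1)) (u (V.w p.2)) = min (u (V.w p'.1)) (u (V.w p'.2)) :=
    congrArg Prod.fst hv
  have h2 : max (u (V.w p.1)) (u (V.w p.2)) = max (u (V.w p'.1)) (u (V.w p'.2)) :=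
    congrArg Prod.snd hv
  rcases minmax_eq h1 h2 with ⟨e1, e2⟩ | ⟨e1, e2⟩
  · exact Prod.ext ((huw _ _).mp e1) ((huw _ _).mp e2)
  · exfalso
    have g1 : p.1 = p'.2 := (huw _ _).mp e1
    have g2 : p.2 = p'.1 := (huw _ _).mp e2
    rw [g1, g2] at hwlt
    exact lt_irrefl _ (hwlt.trans hwlt')

lemma integral_phiMap (q t : ℝ) (hqt : |q| < t) {Ω : Type*} [MeasureSpace Ω]
    [IsProbabilityMeasure (ℙ : Measure Ω)] (μr : ℕ → ℕ → Ω → ℝ)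
    (hnz : ∀ p : PairIdx, ∀ᵐ ω ∂ℙ, μr p.1.1 p.1.2 ω ≠ 0)
    (hmean : ∀ p : PairIdx, ∫ ω, μr p.1.1 p.1.2 ω ∂ℙ = q / t)
    (hsq : ∀ p : PairIdx, ∫ ω, (μr p.1.1 p.1.2 ω) ^ 2 ∂ℙ = 1)
    {n : ℕ} (V : PairPartition n) (u : Fin (2 * n) → ℕ)
    (p : Fin n × Fin n) (k : PairIdx) :
    ∫ ω, phiMap t V u p (μr k.1.1 k.1.2 ω) ∂ℙ = if p ∈ crossSet V then q else t := by
  have ht : (0 : ℝ) < t := lt_of_le_of_lt (abs_nonneg q) hqt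
  unfold phiMap
  split_ifs with hc hlt
  · simp_rw [MeasureTheory.integral_const_mul]
    rw [hmean k]
    field_simp
  · have hx : ∀ x : ℝ, x * (t * x) = t * x ^ 2 := fun x => by ring
    simp_rw [hx, MeasureTheory.integral_const_mul]
    rw [hsq k, mul_one]
  · have hae : (fun ω => (μr k.1.1 k.1.2 ω)⁻¹ * (t * μr k.1.1 k.1.2 ω))
        =ᵐ[(ℙ : Measure Ω)] fun _ => t := by
      filter_upwards [hnz k] with ω hω
      field_simp
    rw [MeasureTheory.integral_congr_ae hae]
    simp

lemma integral_betaProd (q t : ℝ) (hqt : |q| < t) {Ω : Type*} [MeasureSpace Ω]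
    [IsProbabilityMeasure (ℙ : Measure Ω)] (μr : ℕ → ℕ → Ω → ℝ)
    (hmeas : ∀ p : PairIdx, Measurable fun ω => μr p.1.1 p.1.2 ω)
    (hindep : iIndepFun
      (fun p : PairIdx => fun ω => μr p.1.1 p.1.2 ω) ℙ)
    (hnz : ∀ p : PairIdx, ∀ᵐ ω ∂ℙ, μr p.1.1 p.1.2 ω ≠ 0)
    (hmean : ∀ p : PairIdx, ∫ ω, μr p.1.1 p.1.2 ω ∂ℙ = q / t)
    (hsq : ∀ p : PairIdx, ∫ ω, (μr p.1.1 p.1.2 ω) ^ 2 ∂ℙ = 1)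
    {n : ℕ} (V : PairPartition n) (eps : Fin (2 * n) → Bool)
    (heps : ∀ k : Fin n, eps (V.w k) = false ∧ eps (V.z k) = true)
    (u : Fin (2 * n) → ℕ) (hu : tupleEquiv V u) (hu1 : ∀ k, 1 ≤ u k) :
    ∫ ω, betaProd n V eps (presc t fun a b => μr a b ω) u ∂(ℙ : Measure Ω)
      = q ^ crossNum V * t ^ nestNum V := by
  have hre : (fun ω => betaProd n V eps (presc t fun a b => μr a b ω) u)
      = fun ω => ∏ p ∈ crossSet V ∪ nestSet V,
          phiMap t V u p
            ((fun k ω => μr k.1.1 k.1.2 ω)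
              ((fun p : Fin n × Fin n => pidx (u (V.w p.1)) (u (V.w p.2))) p) ω) := by
    funext ω
    exact betaProd_rewrite t _ V eps heps u hu hu1
  rw [hre]
  rw [integral_prod_comp_indep _ hindep hmeas (phiMap t V u) (phiMap_measurable t V u)
    (crossSet V ∪ nestSet V) _ (pidx_injOn V u hu hu1)]
  rw [Finset.prod_congr rfl fun p _ => integral_phiMap q t hqt μr hnz hmean hsq V u p _]
  rw [Finset.prod_union V.disjoint_cross_nest]
  rw [Finset.prod_congr rfl fun p hp => if_pos hp,
    Finset.prod_congr rfl fun p hp =>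
      if_neg (Finset.disjoint_right.mp V.disjoint_cross_nest hp),
    Finset.prod_const, Finset.prod_const]
  rfl

lemma prod_if_cross (q t : ℝ) {n : ℕ} (V : PairPartition n) :
    ∏ p ∈ crossSet V ∪ nestSet V, (if p ∈ crossSet V then q else t)
      = q ^ crossNum V * t ^ nestNum V := by
  rw [Finset.prod_union V.disjoint_cross_nest,
    Finset.prod_congr rfl fun p hp => if_pos hp,
    Finset.prod_congr rfl fun p hp =>
      if_neg (Finset.disjoint_right.mp V.disjoint_cross_nest hp),
    Finset.prod_const, Finset.prod_const]
  rfl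

lemma pidx_cross_tuples {n : ℕ} (V : PairPartition n) (i j : Fin (2 * n) → ℕ)
    (hi1 : ∀ k, 1 ≤ i k) (hj1 : ∀ k, 1 ≤ j k)
    (hiV : tupleEquiv V i) (hjV : tupleEquiv V j)
    (hint : (Finset.univ.image i ∩ Finset.univ.image j).card ≤ 1)
    {p p' : Fin n × Fin n} (hp : p ∈ crossSet V ∪ nestSet V)
    (hp' : p' ∈ crossSet V ∪ nestSet V) :
    pidx (i (V.w p.1)) (i (V.w p.2)) ≠ pidx (j (V.w p'.1)) (j (V.w p'.2)) := by
  intro hEq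
  have hwlt := V.w_lt_of_mem_union hp
  have hwlt' := V.w_lt_of_mem_union hp'
  have hne : i (V.w p.1) ≠ i (V.w p.2) := by
    intro h
    rw [V.sameBlock_w_w.mp ((hiV _ _).mp h)] at hwlt
    exact lt_irrefl _ hwlt
  have hne' : j (V.w p'.1) ≠ j (V.w p'.2) := by
    intro h
    rw [V.sameBlock_w_w.mp ((hjV _ _).mp h)] at hwlt'
    exact lt_irrefl _ hwlt'
  have hv := congrArg Subtype.val hEq
  rw [pidx_val (hi1 _) (hi1 _) hne, pidx_val (hj1 _) (hj1 _) hne'] at hv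
  have h1 : min (i (V.w p.1)) (i (V.w p.2)) = min (j (V.w p'.1)) (j (V.w p'.2)) :=
    congrArg Prod.fst hv
  have h2 : max (i (V.w p.1)) (i (V.w p.2)) = max (j (V.w p'.1)) (j (V.w p'.2)) :=
    congrArg Prod.snd hv
  have hm_i : min (i (V.w p.1)) (i (V.w p.2)) ∈ Finset.univ.image i := by
    rcases min_choice (i (V.w p.1)) (i (V.w p.2)) with h | h <;> rw [h] <;>
      exact Finset.mem_image_of_mem _ (Finset.mem_univ _)
  have hM_i : max (i (V.w p.1)) (i (V.w p.2)) ∈ Finset.univ.image i := by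
    rcases max_choice (i (V.w p.1)) (i (V.w p.2)) with h | h <;> rw [h] <;>
      exact Finset.mem_image_of_mem _ (Finset.mem_univ _)
  have hm_j : min (i (V.w p.1)) (i (V.w p.2)) ∈ Finset.univ.image j := by
    rw [h1]
    rcases min_choice (j (V.w p'.1)) (j (V.w p'.2)) with h | h <;> rw [h] <;>
      exact Finset.mem_image_of_mem _ (Finset.mem_univ _)
  have hM_j : max (i (V.w p.1)) (i (V.w p.2)) ∈ Finset.univ.image j := by
    rw [h2]
    rcases max_choice (j (V.w p'.1)) (j (V.w p'.2)) with h | h <;> rw [h] <;>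
      exact Finset.mem_image_of_mem _ (Finset.mem_univ _)
  have heq2 : min (i (V.w p.1)) (i (V.w p.2)) = max (i (V.w p.1)) (i (V.w p.2)) :=
    Finset.card_le_one.mp hint _ (Finset.mem_inter.mpr ⟨hm_i, hm_j⟩) _
      (Finset.mem_inter.mpr ⟨hM_i, hM_j⟩)
  omega

end Aux

/-- if two tuples, each equivalent to `V` (whose blocks carry the
exponent pattern (1, ∗)), have value sets intersecting in at most one element, then
`E[β(i)·β(j)] = q^{2 cross(V)} t^{2 nest(V)} = E[β(i)]·E[β(j)]`. -/
theorem expectation_factorizes_disjoint_tuples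
    (q t : ℝ) (hqt : |q| < t)
{Ω : Type*} [MeasureSpace Ω] [IsProbabilityMeasure (ℙ : Measure Ω)]
    (μr : ℕ → ℕ → Ω → ℝ)
    (hmeas : ∀ p : PairIdx, Measurable fun ω => μr p.1.1 p.1.2 ω)
    (hindep : iIndepFun
      (fun p : PairIdx => fun ω => μr p.1.1 p.1.2 ω) ℙ)
    (hident : ∀ p p' : PairIdx,
      IdentDistrib (fun ω => μr p.1.1 p.1.2 ω) (fun ω => μr p'.1.1 p'.1.2 ω) ℙ ℙ)
    (hnz : ∀ p : PairIdx, ∀ᵐ ω ∂ℙ, μr p.1.1 p.1.2 ω ≠ 0)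
    (hL2 : ∀ p : PairIdx, MemLp (fun ω => μr p.1.1 p.1.2 ω) 2 ℙ)
    (hmean : ∀ p : PairIdx, ∫ ω, μr p.1.1 p.1.2 ω ∂ℙ = q / t)
    (hsq : ∀ p : PairIdx, ∫ ω, (μr p.1.1 p.1.2 ω) ^ 2 ∂ℙ = 1)
    (n : ℕ) (V : PairPartition n) (eps : Fin (2 * n) → Bool)
    (heps : ∀ m : Fin n, eps (V.w m) = false ∧ eps (V.z m) = true)
    (i j : Fin (2 * n) → ℕ) (hi1 : ∀ k, 1 ≤ i k) (hj1 : ∀ k, 1 ≤ j k)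
    (hiV : tupleEquiv V i) (hjV : tupleEquiv V j)
    (hint : (Finset.univ.image i ∩ Finset.univ.image j).card ≤ 1) :
    (∫ ω, betaProd n V eps (presc t fun a b => μr a b ω) i *
        betaProd n V eps (presc t fun a b => μr a b ω) j ∂(ℙ : Measure Ω)
      = q ^ (2 * crossNum V) * t ^ (2 * nestNum V)) ∧
    (∫ ω, betaProd n V eps (presc t fun a b => μr a b ω) i *
        betaProd n V eps (presc t fun a b => μr a b ω) j ∂(ℙ : Measure Ω)
      = (∫ ω, betaProd n V eps (presc t fun a b => μr a b ω) i ∂(ℙ : Measure Ω)) *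
        ∫ ω, betaProd n V eps (presc t fun a b => μr a b ω) j ∂(ℙ : Measure Ω)) := by
  have hinj : Set.InjOn (fun s : Bool × (Fin n × Fin n) =>
      pidx (cond s.1 j i (V.w s.2.1)) (cond s.1 j i (V.w s.2.2)))
      (↑((Finset.univ : Finset Bool) ×ˢ (crossSet V ∪ nestSet V)) :
        Set (Bool × (Fin n × Fin n))) := by
    rintro ⟨b, p⟩ hs ⟨b', p'⟩ hs' hEq
    rw [Finset.mem_coe, Finset.mem_product] at hs hs'
    simp only at hEq
    cases b <;> cases b'
    · exact Prod.ext rfl (pidx_injOn V i hiV hi1 (Finset.mem_coe.mpr hs.2)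
        (Finset.mem_coe.mpr hs'.2) hEq)
    · exact absurd hEq (pidx_cross_tuples V i j hi1 hj1 hiV hjV hint hs.2 hs'.2)
    · exact absurd hEq.symm (pidx_cross_tuples V i j hi1 hj1 hiV hjV hint hs'.2 hs.2)
    · exact Prod.ext rfl (pidx_injOn V j hjV hj1 (Finset.mem_coe.mpr hs.2)
        (Finset.mem_coe.mpr hs'.2) hEq)
  have hre : (fun ω => betaProd n V eps (presc t fun a b => μr a b ω) i *
      betaProd n V eps (presc t fun a b => μr a b ω) j)
      = fun ω => ∏ s ∈ (Finset.univ : Finset Bool) ×ˢ (crossSet V ∪ nestSet V),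
          phiMap t V (cond s.1 j i) s.2
            (μr (pidx (cond s.1 j i (V.w s.2.1)) (cond s.1 j i (V.w s.2.2))).1.1
                (pidx (cond s.1 j i (V.w s.2.1)) (cond s.1 j i (V.w s.2.2))).1.2 ω) := by
    funext ω
    rw [betaProd_rewrite t (fun a b => μr a b ω) V eps heps i hiV hi1,
      betaProd_rewrite t (fun a b => μr a b ω) V eps heps j hjV hj1,
      Finset.prod_product, Fintype.prod_bool]
    simp only [Bool.cond_true, Bool.cond_false]
    exact (mul_comm _ _)
  have hcore := integral_prod_comp_indep (fun (k : PairIdx) ω => μr k.1.1 k.1.2 ω)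
      hindep hmeas
      (fun s : Bool × (Fin n × Fin n) => phiMap t V (cond s.1 j i) s.2)
      (fun s => phiMap_measurable t V _ _)
      ((Finset.univ : Finset Bool) ×ˢ (crossSet V ∪ nestSet V))
      (fun s => pidx (cond s.1 j i (V.w s.2.1)) (cond s.1 j i (V.w s.2.2))) hinj
  have h2 : ∏ s ∈ (Finset.univ : Finset Bool) ×ˢ (crossSet V ∪ nestSet V),
      ∫ ω, phiMap t V (cond s.1 j i) s.2
        (μr (pidx (cond s.1 j i (V.w s.2.1)) (cond s.1 j i (V.w s.2.2))).1.1
            (pidx (cond s.1 j i (V.w s.2.1)) (cond s.1 j i (V.w s.2.2))).1.2 ω)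
          ∂(ℙ : Measure Ω)
      = q ^ (2 * crossNum V) * t ^ (2 * nestNum V) := by
    rw [Finset.prod_congr rfl fun s _ =>
      integral_phiMap q t hqt μr hnz hmean hsq V (cond s.1 j i) s.2 _]
    rw [Finset.prod_product]
    simp only []
    rw [Finset.prod_congr rfl fun b _ => prod_if_cross q t V, Finset.prod_const]
    rw [Finset.card_univ, Fintype.card_bool, mul_pow, ← pow_mul, ← pow_mul,
      Nat.mul_comm (crossNum V) 2, Nat.mul_comm (nestNum V) 2]
  have key : ∫ ω, betaProd n V eps (presc t fun a b => μr a b ω) i *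
      betaProd n V eps (presc t fun a b => μr a b ω) j ∂(ℙ : Measure Ω)
      = q ^ (2 * crossNum V) * t ^ (2 * nestNum V) := by
    rw [hre]
    exact hcore.trans h2
  refine ⟨key, ?_⟩
  rw [key, integral_betaProd q t hqt μr hmeas hindep hnz hmean hsq V eps heps i hiV hi1,
    integral_betaProd q t hqt μr hmeas hindep hnz hmean hsq V eps heps j hjV hj1,
    two_mul, two_mul, pow_add, pow_add]
  ring
end
end

section
/- Fix t > 0 and nonzero reals {μ(i,j)}_{i<j}. With σ_x := [[1,0],[0,√t·x]], γ := [[0,1],[0,0]], and b_{n,i} := σ_{μ(1,i)} ⊗ … ⊗ σ_{μ(i−1,i)} ⊗ γ ⊗ σ₁^{⊗(n−i)} ∈ M₂(ℝ)^{⊗n}, one has for all 1 ≤ i < j ≤ n: b_{n,i} b_{n,j} = μ(i,j) · b_{n,j} b_{n,i}. -/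
open Filter MeasureTheory ProbabilityTheory
open scoped BigOperators ComplexOrder Classical

noncomputable section

lemma tensor_mul {n : ℕ} (A B : Fin n → Matrix (Fin 2) (Fin 2) ℝ) :
    (Matrix.of fun x y : Fin n → Fin 2 => ∏ k, A k (x k) (y k)) *
      (Matrix.of fun x y : Fin n → Fin 2 => ∏ k, B k (x k) (y k)) =
      Matrix.of fun x y : Fin n → Fin 2 => ∏ k, (A k * B k) (x k) (y k) := by
  ext x y
  simp only [Matrix.mul_apply, Matrix.of_apply, ← Finset.prod_mul_distrib,
    Finset.prod_univ_sum]
  rw [Fintype.piFinset_univ]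

lemma sigma_comm (t a b : ℝ) : sigmaM t a * sigmaM t b = sigmaM t b * sigmaM t a := by
  ext x y
  fin_cases x <;> fin_cases y <;>
    simp [sigmaM, Matrix.mul_apply, Fin.sum_univ_two] <;> ring

lemma gamma_sigma (t x : ℝ) :
    gammaM * sigmaM t x = (Real.sqrt t * x) • (sigmaM t x * gammaM) := by
  ext a b
  fin_cases a <;> fin_cases b <;>
    simp [sigmaM, gammaM, Matrix.mul_apply, Fin.sum_univ_two]

lemma sigma1_gamma {t : ℝ} (ht : 0 < t) :
    sigmaM t 1 * gammaM = (Real.sqrt t)⁻¹ • (gammaM * sigmaM t 1) := by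
  have hs : Real.sqrt t ≠ 0 := by positivity
  ext a b
  fin_cases a <;> fin_cases b <;>
    simp [sigmaM, gammaM, Matrix.mul_apply, Fin.sum_univ_two, hs]

/-- for `1 ≤ i < j ≤ n`, the Jordan–Wigner matrices satisfy
`b_{n,i} b_{n,j} = μ(i,j) · b_{n,j} b_{n,i}`. -/
theorem jordan_wigner_comm (t : ℝ) (ht : 0 < t) (m : ℕ → ℕ → ℝ)
    (hm : ∀ i j : ℕ, i < j → m i j ≠ 0)
    (n i j : ℕ) (hi : 1 ≤ i) (hij : i < j) (hj : j ≤ n) :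
    jw t m n i * jw t m n j = m i j • (jw t m n j * jw t m n i) := by
  have hs : Real.sqrt t ≠ 0 := by positivity
  -- the factors of jw i and jw j
  set F : Fin n → Matrix (Fin 2) (Fin 2) ℝ := fun k =>
    if (k : ℕ) + 1 < i then sigmaM t (m ((k : ℕ) + 1) i)
    else if (k : ℕ) + 1 = i then gammaM else sigmaM t 1 with hF
  set G : Fin n → Matrix (Fin 2) (Fin 2) ℝ := fun k =>
    if (k : ℕ) + 1 < j then sigmaM t (m ((k : ℕ) + 1) j)
    else if (k : ℕ) + 1 = j then gammaM else sigmaM t 1 with hG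
  set c : Fin n → ℝ := fun k =>
    if (k : ℕ) + 1 = i then Real.sqrt t * m i j
    else if (k : ℕ) + 1 = j then (Real.sqrt t)⁻¹ else 1 with hc
  have key : ∀ k : Fin n, F k * G k = c k • (G k * F k) := by
    intro k
    rcases lt_trichotomy ((k : ℕ) + 1) i with h | h | h
    · have hj' : (k : ℕ) + 1 < j := lt_trans h hij
      simp only [hF, hG, hc, h, hj', if_pos, h.ne, if_neg, (lt_trans h hij).ne]
      simp [h, hj', h.ne, (lt_trans h hij).ne, sigma_comm]
    · have hj' : (k : ℕ) + 1 < j := h ▸ hij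
      simp only [hF, hG, hc]
      rw [if_neg (by omega), if_pos h, if_pos hj', if_pos h]
      rw [h, gamma_sigma]
    · rcases lt_trichotomy ((k : ℕ) + 1) j with h2 | h2 | h2
      · simp only [hF, hG, hc]
        rw [if_neg (by omega), if_neg (by omega), if_pos h2, if_neg (by omega),
          if_neg (by omega)]
        simp [sigma_comm]
      · simp only [hF, hG, hc]
        rw [if_neg (by omega), if_neg (by omega), if_neg (by omega), if_pos h2,
          if_neg (by omega), if_pos h2]
        exact sigma1_gamma ht
      · simp only [hF, hG, hc]
        rw [if_neg (by omega), if_neg (by omega), if_neg (by omega), if_neg (by omega),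
          if_neg (by omega), if_neg (by omega)]
        simp
  have hprodc : ∏ k : Fin n, c k = m i j := by
    have hin : i - 1 < n := by omega
    have hjn : j - 1 < n := by omega
    have : ∀ k : Fin n, c k =
        (if (k : ℕ) + 1 = i then Real.sqrt t * m i j else 1) *
        (if (k : ℕ) + 1 = j then (Real.sqrt t)⁻¹ else 1) := by
      intro k
      simp only [hc]
      by_cases h1 : (k : ℕ) + 1 = i
      · rw [if_pos h1, if_pos h1, if_neg (by omega), mul_one]
      · rw [if_neg h1, if_neg h1, one_mul]
    rw [Finset.prod_congr rfl fun k _ => this k, Finset.prod_mul_distrib]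
    have h1 : (∏ k : Fin n, if (k : ℕ) + 1 = i then Real.sqrt t * m i j else 1)
        = Real.sqrt t * m i j := by
      rw [Finset.prod_eq_single (⟨i - 1, hin⟩ : Fin n)]
      · rw [if_pos (by simp; omega)]
      · intro k _ hk
        rw [if_neg (by intro h; apply hk; apply Fin.ext; simp; omega)]
      · simp
    have h2 : (∏ k : Fin n, if (k : ℕ) + 1 = j then (Real.sqrt t)⁻¹ else 1)
        = (Real.sqrt t)⁻¹ := by
      rw [Finset.prod_eq_single (⟨j - 1, hjn⟩ : Fin n)]
      · rw [if_pos (by simp; omega)]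
      · intro k _ hk
        rw [if_neg (by intro h; apply hk; apply Fin.ext; simp; omega)]
      · simp
    rw [h1, h2]
    field_simp
  have e1 : jw t m n i * jw t m n j =
      Matrix.of fun x y : Fin n → Fin 2 => ∏ k, (F k * G k) (x k) (y k) :=
    tensor_mul F G
  have e2 : jw t m n j * jw t m n i =
      Matrix.of fun x y : Fin n → Fin 2 => ∏ k, (G k * F k) (x k) (y k) :=
    tensor_mul G F
  rw [e1, e2]
  ext x y
  simp only [Matrix.of_apply, Matrix.smul_apply, smul_eq_mul]
  calc ∏ k, (F k * G k) (x k) (y k)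
      = ∏ k, c k * (G k * F k) (x k) (y k) := by
        refine Finset.prod_congr rfl fun k _ => ?_
        rw [key k]; simp
    _ = (∏ k : Fin n, c k) * ∏ k, (G k * F k) (x k) (y k) := Finset.prod_mul_distrib
    _ = m i j * ∏ k, (G k * F k) (x k) (y k) := by rw [hprodc]
end
end
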